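/- An SL₂-tiling M over a commutative ring R is tame if and only if there exist bi-infinite sequences (rᵢ) and (sⱼ) in R such that m_{i-1,j} + m_{i+1,j} = rᵢ·m_{i,j} and m_{i,j-1} + m_{i,j+1} = sⱼ·m_{i,j} for all i,j ∈ ℤ; moreover if M is tame these sequences are unique. -/

import Mathlib

private def aCoef {R : Type*} [CommRing R] (m : ℤ → ℤ → R) (i j : ℤ) : R :=
  m (i - 1) j * m (i + 1) (j + 1) - m (i - 1) (j + 1) * m (i + 1) j

private lemma lemA1 {R : Type*} [CommRing R] (m : ℤ → ℤ → R)
    (hSL : ∀ i j : ℤ, m i j * m (i + 1) (j + 1) - m i (j + 1) * m (i + 1) j = 1)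
    (i j : ℤ) : m (i - 1) j + m (i + 1) j
      = (m (i - 1) j * m (i + 1) (j + 1) - m (i - 1) (j + 1) * m (i + 1) j) * m i j := by
  have h1 := hSL (i - 1) j
  rw [show i - 1 + 1 = i by ring] at h1
  linear_combination (-(m (i - 1) j)) * hSL i j - m (i + 1) j * h1

private lemma lemA2 {R : Type*} [CommRing R] (m : ℤ → ℤ → R)
    (hSL : ∀ i j : ℤ, m i j * m (i + 1) (j + 1) - m i (j + 1) * m (i + 1) j = 1)
    (i j : ℤ) : m (i - 1) (j + 1) + m (i + 1) (j + 1)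
      = (m (i - 1) j * m (i + 1) (j + 1) - m (i - 1) (j + 1) * m (i + 1) j) * m i (j + 1) := by
  have h1 := hSL (i - 1) j
  rw [show i - 1 + 1 = i by ring] at h1
  linear_combination (-(m (i - 1) (j + 1))) * hSL i j - m (i + 1) (j + 1) * h1

private lemma exists_row_seq {R : Type*} [CommRing R] (m : ℤ → ℤ → R)
    (hSL : ∀ i j : ℤ, m i j * m (i + 1) (j + 1) - m i (j + 1) * m (i + 1) j = 1)
    (ht : ∀ i j : ℤ,
      m (i - 1) (j - 1) * (m i j * m (i + 1) (j + 1) - m i (j + 1) * m (i + 1) j)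
      - m (i - 1) j * (m i (j - 1) * m (i + 1) (j + 1) - m i (j + 1) * m (i + 1) (j - 1))
      + m (i - 1) (j + 1) * (m i (j - 1) * m (i + 1) j - m i j * m (i + 1) (j - 1)) = 0) :
    ∃ r : ℤ → R, ∀ i j : ℤ, m (i - 1) j + m (i + 1) j = r i * m i j := by
  -- A2 and A1 one column to the right, with indices normalized
  have lemA1' : ∀ i j : ℤ, m (i - 1) (j + 1) + m (i + 1) (j + 1)
      = (m (i - 1) (j + 1) * m (i + 1) (j + 2) - m (i - 1) (j + 2) * m (i + 1) (j + 1))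
        * m i (j + 1) := by
    intro i j
    have := lemA1 m hSL i (j + 1)
    rwa [show j + 1 + 1 = j + 2 by ring] at this
  have lemA2' : ∀ i j : ℤ, m (i - 1) (j + 2) + m (i + 1) (j + 2)
      = (m (i - 1) (j + 1) * m (i + 1) (j + 2) - m (i - 1) (j + 2) * m (i + 1) (j + 1))
        * m i (j + 2) := by
    intro i j
    have := lemA2 m hSL i (j + 1)
    rwa [show j + 1 + 1 = j + 2 by ring] at this
  have hv2 : ∀ i j : ℤ,
      ((m (i - 1) (j + 1) * m (i + 1) (j + 2) - m (i - 1) (j + 2) * m (i + 1) (j + 1))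
       - (m (i - 1) j * m (i + 1) (j + 1) - m (i - 1) (j + 1) * m (i + 1) j))
      * m i (j + 1) = 0 := by
    intro i j
    linear_combination lemA2 m hSL i j - lemA1' i j
  have hv3 : ∀ i j : ℤ,
      ((m (i - 1) (j + 1) * m (i + 1) (j + 2) - m (i - 1) (j + 2) * m (i + 1) (j + 1))
       - (m (i - 1) j * m (i + 1) (j + 1) - m (i - 1) (j + 1) * m (i + 1) j))
      * m i (j + 2) = 0 := by
    intro i j
    have hd := ht i (j + 1)
    rw [show j + 1 - 1 = j by ring, show j + 1 + 1 = j + 2 by ring] at hd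
    linear_combination hd
      - (m i (j + 1) * m (i + 1) (j + 2) - m i (j + 2) * m (i + 1) (j + 1)) * lemA1 m hSL i j
      - (m i (j + 2) * m (i + 1) j - m i j * m (i + 1) (j + 2)) * lemA2 m hSL i j
      - (m i j * m (i + 1) (j + 1) - m i (j + 1) * m (i + 1) j) * lemA2' i j
      - ((m (i - 1) (j + 1) * m (i + 1) (j + 2) - m (i - 1) (j + 2) * m (i + 1) (j + 1))
         - (m (i - 1) j * m (i + 1) (j + 1) - m (i - 1) (j + 1) * m (i + 1) j))
        * m i (j + 2) * (hSL i j)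
  have hstep : ∀ i j : ℤ, aCoef m i (j + 1) = aCoef m i j := by
    intro i j
    unfold aCoef
    rw [show j + 1 + 1 = j + 2 by ring]
    have h2 := hSL i (j + 1)
    rw [show j + 1 + 1 = j + 2 by ring] at h2
    linear_combination (-((m (i - 1) (j + 1) * m (i + 1) (j + 2)
        - m (i - 1) (j + 2) * m (i + 1) (j + 1))
        - (m (i - 1) j * m (i + 1) (j + 1) - m (i - 1) (j + 1) * m (i + 1) j))) * h2
      + m (i + 1) (j + 2) * hv2 i j - m (i + 1) (j + 1) * hv3 i j
  have hconst : ∀ i j : ℤ, aCoef m i j = aCoef m i 0 := by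
    intro i j
    induction j using Int.induction_on with
    | zero => rfl
    | succ k ih => exact (hstep i k).trans ih
    | pred k ih =>
        have h := hstep i (-(k : ℤ) - 1)
        rw [show -(k : ℤ) - 1 + 1 = -(k : ℤ) by ring] at h
        exact h.symm.trans ih
  refine ⟨fun i => aCoef m i 0, fun i j => ?_⟩
  show m (i - 1) j + m (i + 1) j = aCoef m i 0 * m i j
  rw [← hconst i j]
  exact lemA1 m hSL i j

theorem tame_iff_linear_recurrences {R : Type*} [CommRing R] (m : ℤ → ℤ → R)
    (hSL : ∀ i j : ℤ, m i j * m (i + 1) (j + 1) - m i (j + 1) * m (i + 1) j = 1) :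
    ((∀ i j : ℤ,
        Matrix.det !![m (i - 1) (j - 1), m (i - 1) j, m (i - 1) (j + 1);
                      m i (j - 1), m i j, m i (j + 1);
                      m (i + 1) (j - 1), m (i + 1) j, m (i + 1) (j + 1)] = 0) ↔
      ∃ r s : ℤ → R, ∀ i j : ℤ,
        m (i - 1) j + m (i + 1) j = r i * m i j ∧
        m i (j - 1) + m i (j + 1) = s j * m i j) ∧
    ((∀ i j : ℤ,
        Matrix.det !![m (i - 1) (j - 1), m (i - 1) j, m (i - 1) (j + 1);
                      m i (j - 1), m i j, m i (j + 1);
                      m (i + 1) (j - 1), m (i + 1) j, m (i + 1) (j + 1)] = 0) →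
      ∀ r s r' s' : ℤ → R,
        (∀ i j : ℤ, m (i - 1) j + m (i + 1) j = r i * m i j ∧
          m i (j - 1) + m i (j + 1) = s j * m i j) →
        (∀ i j : ℤ, m (i - 1) j + m (i + 1) j = r' i * m i j ∧
          m i (j - 1) + m i (j + 1) = s' j * m i j) →
        r = r' ∧ s = s') := by
  constructor
  · constructor
    · intro h
      have ht : ∀ i j : ℤ,
          m (i - 1) (j - 1) * (m i j * m (i + 1) (j + 1) - m i (j + 1) * m (i + 1) j)
          - m (i - 1) j * (m i (j - 1) * m (i + 1) (j + 1) - m i (j + 1) * m (i + 1) (j - 1))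
          + m (i - 1) (j + 1) * (m i (j - 1) * m (i + 1) j - m i j * m (i + 1) (j - 1)) = 0 := by
        intro i j
        have hd := h i j
        simp [Matrix.det_fin_three] at hd
        linear_combination hd
      obtain ⟨r, hr⟩ := exists_row_seq m hSL ht
      have hSL' : ∀ i j : ℤ, (fun i j => m j i) i j * (fun i j => m j i) (i + 1) (j + 1)
          - (fun i j => m j i) i (j + 1) * (fun i j => m j i) (i + 1) j = 1 := by
        intro i j
        linear_combination hSL j i
      have ht' : ∀ i j : ℤ,
          (fun i j => m j i) (i - 1) (j - 1) * ((fun i j => m j i) i j * (fun i j => m j i) (i + 1) (j + 1) - (fun i j => m j i) i (j + 1) * (fun i j => m j i) (i + 1) j)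
          - (fun i j => m j i) (i - 1) j * ((fun i j => m j i) i (j - 1) * (fun i j => m j i) (i + 1) (j + 1) - (fun i j => m j i) i (j + 1) * (fun i j => m j i) (i + 1) (j - 1))
          + (fun i j => m j i) (i - 1) (j + 1) * ((fun i j => m j i) i (j - 1) * (fun i j => m j i) (i + 1) j - (fun i j => m j i) i j * (fun i j => m j i) (i + 1) (j - 1)) = 0 := by
        intro i j
        linear_combination ht j i
      obtain ⟨s, hs⟩ := exists_row_seq (fun i j => m j i) hSL' ht'
      exact ⟨r, s, fun i j => ⟨hr i j, hs j i⟩⟩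
    · rintro ⟨r, s, hrs⟩ i j
      simp [Matrix.det_fin_three]
      linear_combination
        (m i j * m (i + 1) (j + 1) - m i (j + 1) * m (i + 1) j) * (hrs i (j - 1)).1
        - (m i (j - 1) * m (i + 1) (j + 1) - m i (j + 1) * m (i + 1) (j - 1)) * (hrs i j).1
        + (m i (j - 1) * m (i + 1) j - m i j * m (i + 1) (j - 1)) * (hrs i (j + 1)).1
  · intro _ r s r' s' h1 h2
    constructor
    · funext x
      have hS := hSL (x - 1) 0
      rw [show x - 1 + 1 = x by ring, show (0 : ℤ) + 1 = 1 by ring] at hS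
      linear_combination (-(r x - r' x)) * hS
        - m (x - 1) 1 * ((h2 x 0).1 - (h1 x 0).1)
        + m (x - 1) 0 * ((h2 x 1).1 - (h1 x 1).1)
    · funext x
      have hS := hSL 0 (x - 1)
      rw [show x - 1 + 1 = x by ring, show (0 : ℤ) + 1 = 1 by ring] at hS
      linear_combination (-(s x - s' x)) * hS
        + m 0 (x - 1) * ((h2 1 x).2 - (h1 1 x).2)
        - m 1 (x - 1) * ((h2 0 x).2 - (h1 0 x).2)
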